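/- arXiv:1105.1894 — 2 statements merged into one kernel-verified Lean document; each statement's English description precedes it below -/
import Mathlib

section
/- Let F be a finite field and E an extension field of F, let n be a positive integer, α ∈ E of multiplicative order exactly n, and b an integer. Let h, f ∈ F[X] with f(0) ≠ 0, and let a_j ∈ F be the j-th coefficient of the formal power series h/f ∈ F[[X]]. Let e ∈ F[X] with deg e < n have support set 𝓔, and let μ ≥ 2. Define S(X) = Σ_{j=0}^{μ−2} a_j e(α^{b+j}) X^j ∈ E[X], Λ(X) = ∏_{i∈𝓔} f(α^i X) ∈ E[X], and Ω(X) = Σ_{i∈𝓔} e_i α^{i b} h(α^i X) ∏_{j∈𝓔, j≠i} f(α^j X) ∈ E[X]. Then X^{μ−1} divides Λ(X)·S(X) − Ω(X) in E[X]. -/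
open Polynomial

/-- The polynomial `f(γ·X)`: map the coefficients along `φ` and substitute `γ·X` for `X`. -/
noncomputable def polySubst {F E : Type*} [CommRing F] [CommRing E]
    (φ : F →+* E) (f : Polynomial F) (γ : E) : Polynomial E :=
  (f.map φ).comp (Polynomial.C γ * Polynomial.X)

lemma coeff_comp_C_mul_X {R : Type*} [CommSemiring R] (p : R[X]) (γ : R) (k : ℕ) :
    (p.comp (Polynomial.C γ * Polynomial.X)).coeff k = p.coeff k * γ ^ k := by
  induction p using Polynomial.induction_on' with
  | add p q hp hq => simp [add_comp, hp, hq, add_mul]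
  | monomial n c =>
    rw [← C_mul_X_pow_eq_monomial, C_mul_comp, X_pow_comp, mul_pow, ← C_pow, ← mul_assoc,
      ← C_mul, C_mul_X_pow_eq_monomial, coeff_monomial]
    rw [coeff_C_mul, coeff_X_pow]; split <;> simp_all [eq_comm]

lemma coeff_polySubst {F E : Type*} [CommRing F] [CommRing E]
    (φ : F →+* E) (p : Polynomial F) (γ : E) (k : ℕ) :
    (polySubst φ p γ).coeff k = φ (p.coeff k) * γ ^ k := by
  simp [polySubst, coeff_comp_C_mul_X, Polynomial.coeff_map]

lemma coe_polySubst {F E : Type*} [CommRing F] [CommRing E]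
    (φ : F →+* E) (p : Polynomial F) (γ : E) :
    ((polySubst φ p γ : Polynomial E) : PowerSeries E)
      = PowerSeries.rescale γ ((p.map φ : Polynomial E) : PowerSeries E) := by
  ext k
  simp [Polynomial.coeff_coe, PowerSeries.coeff_rescale, coeff_polySubst,
    Polynomial.coeff_map, mul_comm]

lemma map_coe_poly {F E : Type*} [CommRing F] [CommRing E]
    (φ : F →+* E) (p : Polynomial F) :
    PowerSeries.map φ ((p : Polynomial F) : PowerSeries F)
      = ((p.map φ : Polynomial E) : PowerSeries E) := by
  ext k
  simp [Polynomial.coeff_coe, PowerSeries.coeff_map, Polynomial.coeff_map]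

/-- The generalized key equation (equation (19)):
`Λ(X)·S(X) ≡ Ω(X) mod X^{μ−1}`. -/
theorem generalized_key_equation
    (F E : Type*) [Field F] [Fintype F] [Field E] [Algebra F E]
    (n : ℕ) (hn : 0 < n) (α : E) (hα : orderOf α = n) (b : ℤ)
    (h f : Polynomial F) (hf0 : f.coeff 0 ≠ 0)
    (a : ℕ → F)
    (ha : (PowerSeries.mk a) * (f : PowerSeries F) = (h : PowerSeries F))
    (e : Polynomial F) (hedeg : e.natDegree < n)
    (μ : ℕ) (hμ : 2 ≤ μ)
    (S Λ Ω : Polynomial E)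
    (hS : S = ∑ j ∈ Finset.range (μ - 1),
      Polynomial.C (algebraMap F E (a j) *
        (e.map (algebraMap F E)).eval (α ^ (b + (j : ℤ)))) * Polynomial.X ^ j)
    (hΛ : Λ = ∏ i ∈ e.support, polySubst (algebraMap F E) f (α ^ (i : ℤ)))
    (hΩ : Ω = ∑ i ∈ e.support,
      Polynomial.C (algebraMap F E (e.coeff i) * α ^ ((i : ℤ) * b)) *
        polySubst (algebraMap F E) h (α ^ (i : ℤ)) *
        ∏ j ∈ e.support.erase i, polySubst (algebraMap F E) f (α ^ (j : ℤ))) :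
    (Polynomial.X : Polynomial E) ^ (μ - 1) ∣ Λ * S - Ω := by
  set φ := algebraMap F E with hφ
  have hα0 : α ≠ 0 := by
    intro h0
    have h1 : α ^ n = 1 := hα ▸ pow_orderOf_eq_one α
    rw [h0, zero_pow hn.ne'] at h1
    exact zero_ne_one h1
  set A : PowerSeries E := PowerSeries.mk fun j => φ (a j) with hAdef
  have hA : A * ((f.map φ : Polynomial E) : PowerSeries E)
      = ((h.map φ : Polynomial E) : PowerSeries E) := by
    have h2 := congrArg (PowerSeries.map φ) ha
    rw [map_mul, map_coe_poly, map_coe_poly] at h2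
    have h3 : PowerSeries.map φ (PowerSeries.mk a) = A := by
      ext k; simp [PowerSeries.coeff_map, hAdef, PowerSeries.coeff_mk]
    rwa [h3] at h2
  have key : ∀ γ : E,
      PowerSeries.rescale γ A * ((polySubst φ f γ : Polynomial E) : PowerSeries E)
        = ((polySubst φ h γ : Polynomial E) : PowerSeries E) := by
    intro γ
    rw [coe_polySubst, coe_polySubst, ← map_mul, hA]
  set Sinf : PowerSeries E := ∑ i ∈ e.support,
    PowerSeries.C (φ (e.coeff i) * α ^ ((i : ℤ) * b)) * PowerSeries.rescale (α ^ (i : ℤ)) A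
    with hSinf
  have coe_prod : ∀ (s : Finset ℕ),
      ((∏ j ∈ s, polySubst φ f (α ^ (j : ℤ)) : Polynomial E) : PowerSeries E)
        = ∏ j ∈ s, ((polySubst φ f (α ^ (j : ℤ)) : Polynomial E) : PowerSeries E) := by
    intro s
    rw [← Polynomial.coeToPowerSeries.ringHom_apply, map_prod]
    simp [Polynomial.coeToPowerSeries.ringHom_apply]
  have claimA : ((Λ : Polynomial E) : PowerSeries E) * Sinf
      = ((Ω : Polynomial E) : PowerSeries E) := by
    have coeSum : ((∑ i ∈ e.support,
        (Polynomial.C (φ (e.coeff i) * α ^ ((i : ℤ) * b)) * polySubst φ h (α ^ (i : ℤ)) *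
          ∏ j ∈ e.support.erase i, polySubst φ f (α ^ (j : ℤ))) : Polynomial E) : PowerSeries E)
        = ∑ i ∈ e.support,
            PowerSeries.C (φ (e.coeff i) * α ^ ((i : ℤ) * b)) *
              ((polySubst φ h (α ^ (i : ℤ)) : Polynomial E) : PowerSeries E) *
              ∏ j ∈ e.support.erase i,
                ((polySubst φ f (α ^ (j : ℤ)) : Polynomial E) : PowerSeries E) := by
      rw [← Polynomial.coeToPowerSeries.ringHom_apply, map_sum]
      refine Finset.sum_congr rfl fun i hi => ?_
      rw [map_mul, map_mul, map_prod]
      simp only [Polynomial.coeToPowerSeries.ringHom_apply, Polynomial.coe_C]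
    rw [hΛ, hΩ, hSinf, coe_prod, Finset.mul_sum, coeSum]
    refine Finset.sum_congr rfl fun i hi => ?_
    calc (∏ j ∈ e.support, ((polySubst φ f (α ^ (j : ℤ)) : Polynomial E) : PowerSeries E)) *
          (PowerSeries.C (φ (e.coeff i) * α ^ ((i : ℤ) * b)) *
            PowerSeries.rescale (α ^ (i : ℤ)) A)
        = PowerSeries.C (φ (e.coeff i) * α ^ ((i : ℤ) * b)) *
            (PowerSeries.rescale (α ^ (i : ℤ)) A *
              ((polySubst φ f (α ^ (i : ℤ)) : Polynomial E) : PowerSeries E)) *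
            ∏ j ∈ e.support.erase i,
              ((polySubst φ f (α ^ (j : ℤ)) : Polynomial E) : PowerSeries E) := by
          rw [← Finset.mul_prod_erase _ _ hi]; ring
      _ = _ := by rw [key]
  have claimB : (PowerSeries.X : PowerSeries E) ^ (μ - 1) ∣ ((S : Polynomial E) : PowerSeries E) - Sinf := by
    rw [PowerSeries.X_pow_dvd_iff]
    intro d hd
    have hcS : (PowerSeries.coeff d) ((S : Polynomial E) : PowerSeries E)
        = φ (a d) * (e.map φ).eval (α ^ (b + (d : ℤ))) := by
      rw [Polynomial.coeff_coe, hS, finset_sum_coeff]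
      rw [Finset.sum_eq_single d]
      · simp [mul_assoc, coeff_C_mul, coeff_X_pow]
      · intro j _ hjd
        simp [mul_assoc, coeff_C_mul, coeff_X_pow, Ne.symm hjd]
      · intro hd'
        exact absurd (Finset.mem_range.mpr hd) hd'
    have hcS' : (PowerSeries.coeff d) Sinf
        = ∑ i ∈ e.support,
            φ (e.coeff i) * α ^ ((i : ℤ) * b) * ((α ^ (i : ℤ)) ^ d * φ (a d)) := by
      rw [hSinf, map_sum]
      refine Finset.sum_congr rfl fun i hi => ?_
      rw [PowerSeries.coeff_C_mul, PowerSeries.coeff_rescale, hAdef, PowerSeries.coeff_mk]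
    rw [map_sub, hcS, hcS', sub_eq_zero]
    have hsupp : (e.map φ).support = e.support :=
      Polynomial.support_map_of_injective e (algebraMap F E).injective
    rw [Polynomial.eval_eq_sum, Polynomial.sum_def, hsupp, Finset.mul_sum]
    refine Finset.sum_congr rfl fun i hi => ?_
    rw [Polynomial.coeff_map]
    have hpow : (α ^ (b + (d : ℤ))) ^ i = α ^ ((i : ℤ) * b) * (α ^ (i : ℤ)) ^ d := by
      rw [← zpow_natCast (α ^ (b + (d : ℤ))) i, ← zpow_mul,
        ← zpow_natCast (α ^ (i : ℤ)) d, ← zpow_mul, ← zpow_add₀ hα0]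
      congr 1
      ring
    rw [hpow]
    ring
  have main : (PowerSeries.X : PowerSeries E) ^ (μ - 1)
      ∣ ((Λ * S - Ω : Polynomial E) : PowerSeries E) := by
    have heq : ((Λ * S - Ω : Polynomial E) : PowerSeries E)
        = ((Λ : Polynomial E) : PowerSeries E) * (((S : Polynomial E) : PowerSeries E) - Sinf) := by
      rw [Polynomial.coe_sub, Polynomial.coe_mul, mul_sub, claimA]
    rw [heq]
    exact claimB.mul_left _
  rw [Polynomial.X_pow_dvd_iff]
  intro d hd
  have hc := PowerSeries.X_pow_dvd_iff.mp main d hd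
  rwa [Polynomial.coeff_coe] at hc
end

section
/- Let F be a finite field and E an extension field of F, let n be a positive integer, α ∈ E of multiplicative order exactly n, and b an integer. Let h, f ∈ F[X] with f(0) ≠ 0 and u := deg f, and let a_j ∈ F be the j-th coefficient of the formal power series h/f ∈ F[[X]]. Let e ∈ F[X] with deg e < n have support set 𝓔 of size t, let μ ≥ 2, and define S(X) = Σ_{j=0}^{μ−2} a_j e(α^{b+j}) X^j, Λ(X) = ∏_{i∈𝓔} f(α^i X), Ω(X) = Σ_{i∈𝓔} e_i α^{i b} h(α^i X) ∏_{j∈𝓔, j≠i} f(α^j X), all in E[X]. Suppose deg h < u and t·u ≤ ⌊(μ−1)/2⌋. Then for any polynomials λ, ω ∈ E[X] with λ ≠ 0, deg λ ≤ ⌊(μ−1)/2⌋, deg ω < deg λ, and X^{μ−1} dividing λ(X)·S(X) − ω(X), one has λ(X)·Ω(X) = ω(X)·Λ(X). -/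
open Polynomial

lemma comp_C_mul_X_coeff {R : Type*} [CommRing R] (p : R[X]) (γ : R) (n : ℕ) :
    (p.comp (C γ * X)).coeff n = γ ^ n * p.coeff n := by
  conv_lhs => rw [← p.sum_C_mul_X_pow_eq]
  rw [Polynomial.sum_def, Polynomial.sum_comp, finset_sum_coeff]
  simp only [mul_comp, C_comp, X_pow_comp, mul_pow, ← C_pow, ← mul_assoc, ← C_mul,
    coeff_C_mul, coeff_X_pow, mul_ite, mul_one, mul_zero]
  simp only [eq_comm (a := n)]
  rw [Finset.sum_ite_eq' p.support n (fun i => p.coeff i * γ ^ i)]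
  by_cases hn : n ∈ p.support
  · simp [hn, mul_comm]
  · simp [hn, Polynomial.notMem_support_iff.mp hn]

lemma polySubst_coe {F E : Type*} [CommRing F] [CommRing E]
    (φ : F →+* E) (f : Polynomial F) (γ : E) :
    ((polySubst φ f γ : Polynomial E) : PowerSeries E)
      = PowerSeries.rescale γ ((f.map φ : Polynomial E) : PowerSeries E) := by
  ext n
  rw [Polynomial.coeff_coe, PowerSeries.coeff_rescale, Polynomial.coeff_coe, polySubst,
    _root_.comp_C_mul_X_coeff]

lemma map_coe_powerSeries {F E : Type*} [CommRing F] [CommRing E]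
    (φ : F →+* E) (p : Polynomial F) :
    PowerSeries.map φ (p : PowerSeries F) = ((p.map φ : Polynomial E) : PowerSeries E) := by
  ext n
  rw [PowerSeries.coeff_map, Polynomial.coeff_coe, Polynomial.coeff_coe, Polynomial.coeff_map]

lemma natDegree_polySubst_le {F E : Type*} [CommRing F] [CommRing E]
    (φ : F →+* E) (f : Polynomial F) (γ : E) :
    (polySubst φ f γ).natDegree ≤ f.natDegree := by
  refine le_trans (natDegree_comp_le) ?_
  calc (f.map φ).natDegree * (C γ * X).natDegree
      ≤ f.natDegree * 1 := Nat.mul_le_mul (natDegree_map_le)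
        (le_trans natDegree_mul_le (by simp [natDegree_X_le]))
    _ = f.natDegree := mul_one _

/-- Uniqueness part of Lemma 5 (Solving the Key Equation): if the number of
errors satisfies `t·u ≤ ⌊(μ−1)/2⌋`, then any solution `(lam, om)` of the key
equation with the stated degree constraints is proportional to `(Λ, Ω)`. -/
theorem key_equation_unique_solution
    (F E : Type*) [Field F] [Fintype F] [Field E] [Algebra F E]
    (n : ℕ) (hn : 0 < n) (α : E) (hα : orderOf α = n) (b : ℤ)
    (h f : Polynomial F) (hf0 : f.coeff 0 ≠ 0)
    (hdeg : h.natDegree < f.natDegree)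
    (a : ℕ → F)
    (ha : (PowerSeries.mk a) * (f : PowerSeries F) = (h : PowerSeries F))
    (e : Polynomial F) (hedeg : e.natDegree < n)
    (μ : ℕ) (hμ : 2 ≤ μ)
    (ht : e.support.card * f.natDegree ≤ (μ - 1) / 2)
    (S Λ Ω : Polynomial E)
    (hS : S = ∑ j ∈ Finset.range (μ - 1),
      Polynomial.C (algebraMap F E (a j) *
        (e.map (algebraMap F E)).eval (α ^ (b + (j : ℤ)))) * Polynomial.X ^ j)
    (hΛ : Λ = ∏ i ∈ e.support, polySubst (algebraMap F E) f (α ^ (i : ℤ)))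
    (hΩ : Ω = ∑ i ∈ e.support,
      Polynomial.C (algebraMap F E (e.coeff i) * α ^ ((i : ℤ) * b)) *
        polySubst (algebraMap F E) h (α ^ (i : ℤ)) *
        ∏ j ∈ e.support.erase i, polySubst (algebraMap F E) f (α ^ (j : ℤ)))
    (lam om : Polynomial E) (hlam0 : lam ≠ 0)
    (hlamdeg : lam.natDegree ≤ (μ - 1) / 2)
    (homdeg : om.degree < lam.degree)
    (hke : (Polynomial.X : Polynomial E) ^ (μ - 1) ∣ lam * S - om) :
    lam * Ω = om * Λ := by
  classical
  set φ := algebraMap F E with hφ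
  have hα1 : α ^ n = 1 := hα ▸ pow_orderOf_eq_one α
  have hα0 : α ≠ 0 := by
    rintro rfl
    rw [zero_pow hn.ne'] at hα1
    exact zero_ne_one hα1
  set t := e.support.card with hts
  set u := f.natDegree with hu
  set K := (μ - 1) / 2 with hK
  -- the rescaled power series identities
  have step0 : PowerSeries.map φ (PowerSeries.mk a) * ((f.map φ : Polynomial E) : PowerSeries E)
      = ((h.map φ : Polynomial E) : PowerSeries E) := by
    rw [← map_coe_powerSeries, ← map_coe_powerSeries, ← map_mul, ha]
  set A : PowerSeries E := PowerSeries.map φ (PowerSeries.mk a) with hA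
  have step1 : ∀ i : ℕ, PowerSeries.rescale (α ^ (i : ℤ)) A *
      ((polySubst φ f (α ^ (i : ℤ)) : Polynomial E) : PowerSeries E)
      = ((polySubst φ h (α ^ (i : ℤ)) : Polynomial E) : PowerSeries E) := by
    intro i
    rw [polySubst_coe, polySubst_coe, ← map_mul, step0]
  set T : PowerSeries E := ∑ i ∈ e.support,
    PowerSeries.C (φ (e.coeff i) * α ^ ((i : ℤ) * b)) *
      PowerSeries.rescale (α ^ (i : ℤ)) A with hT
  have step2 : ((Λ : Polynomial E) : PowerSeries E) * T = ((Ω : Polynomial E) : PowerSeries E) := by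
    have key : ∀ i ∈ e.support,
        ((Λ : Polynomial E) : PowerSeries E) *
          (PowerSeries.C (φ (e.coeff i) * α ^ ((i : ℤ) * b)) *
            PowerSeries.rescale (α ^ (i : ℤ)) A)
        = ((Polynomial.C (φ (e.coeff i) * α ^ ((i : ℤ) * b)) *
            polySubst φ h (α ^ (i : ℤ)) *
            ∏ j ∈ e.support.erase i, polySubst φ f (α ^ (j : ℤ)) : Polynomial E)
              : PowerSeries E) := by
      intro i hi
      have hΛi : Λ = polySubst φ f (α ^ (i : ℤ)) *
          ∏ j ∈ e.support.erase i, polySubst φ f (α ^ (j : ℤ)) := by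
        rw [hΛ, ← Finset.mul_prod_erase _ _ hi]
      rw [hΛi, Polynomial.coe_mul, Polynomial.coe_mul, Polynomial.coe_mul, Polynomial.coe_C,
        ← step1 i]
      ring
    rw [hT, Finset.mul_sum, hΩ]
    conv_rhs => rw [← Polynomial.coeToPowerSeries.ringHom_apply, map_sum]
    refine Finset.sum_congr rfl fun i hi => ?_
    rw [Polynomial.coeToPowerSeries.ringHom_apply]
    exact key i hi
  have step3 : ∀ j < μ - 1,
      (PowerSeries.coeff j) ((S : Polynomial E) : PowerSeries E) = PowerSeries.coeff j T := by
    intro j hj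
    have hSj : (PowerSeries.coeff j) ((S : Polynomial E) : PowerSeries E)
        = φ (a j) * (e.map φ).eval (α ^ (b + (j : ℤ))) := by
      rw [Polynomial.coeff_coe, hS, finset_sum_coeff]
      simp only [coeff_C_mul, coeff_X_pow, mul_ite, mul_one, mul_zero]
      rw [Finset.sum_ite_eq (Finset.range (μ - 1)) j
        (fun k => φ (a k) * (e.map φ).eval (α ^ (b + (k : ℤ))))]
      simp [Finset.mem_range.mpr hj]
    have hTj : (PowerSeries.coeff j) T
        = ∑ i ∈ e.support, (φ (e.coeff i) * α ^ ((i : ℤ) * b)) *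
            ((α ^ (i : ℤ)) ^ j * φ (a j)) := by
      rw [hT, map_sum]
      refine Finset.sum_congr rfl fun i _ => ?_
      rw [PowerSeries.coeff_C_mul, PowerSeries.coeff_rescale, hA,
        PowerSeries.coeff_map, PowerSeries.coeff_mk]
    have heval : (e.map φ).eval (α ^ (b + (j : ℤ)))
        = ∑ i ∈ e.support, φ (e.coeff i) * (α ^ (b + (j : ℤ))) ^ i := by
      rw [Polynomial.eval_map, Polynomial.eval₂_eq_sum, Polynomial.sum_def]
    rw [hSj, hTj, heval, Finset.mul_sum]
    refine Finset.sum_congr rfl fun i _ => ?_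
    have hz : (α ^ (b + (j : ℤ))) ^ (i : ℕ)
        = α ^ ((i : ℤ) * b) * (α ^ (i : ℤ)) ^ (j : ℕ) := by
      rw [← zpow_natCast (α ^ (b + (j : ℤ))) i, ← zpow_mul,
        ← zpow_natCast (α ^ (i : ℤ)) j, ← zpow_mul, ← zpow_add₀ hα0]
      congr 1
      ring
    rw [hz]
    ring
  have step4 : (Polynomial.X : Polynomial E) ^ (μ - 1) ∣ Λ * S - Ω := by
    rw [Polynomial.X_pow_dvd_iff]
    intro d hd
    have : (PowerSeries.coeff d) (((Λ * S - Ω : Polynomial E)) : PowerSeries E) = 0 := by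
      have hfac : ((Λ * S - Ω : Polynomial E) : PowerSeries E)
          = ((Λ : Polynomial E) : PowerSeries E)
            * (((S : Polynomial E) : PowerSeries E) - T) := by
        rw [mul_sub, step2]
        push_cast
        ring
      rw [hfac, PowerSeries.coeff_mul]
      apply Finset.sum_eq_zero
      rintro ⟨x, y⟩ hxy
      have hy : y < μ - 1 := lt_of_le_of_lt
        (Finset.HasAntidiagonal.antidiagonal.snd_le hxy) hd
      rw [map_sub, step3 y hy, sub_self, mul_zero]
    rwa [Polynomial.coeff_coe] at this
  -- degree bounds
  have hΛdeg : Λ.natDegree ≤ t * u := by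
    rw [hΛ]
    refine le_trans (Polynomial.natDegree_prod_le _ _) ?_
    refine le_trans (Finset.sum_le_card_nsmul _ _ u fun i _ => natDegree_polySubst_le _ _ _) ?_
    simp [hts, mul_comm]
  have hu1 : 1 ≤ u := lt_of_le_of_lt (Nat.zero_le _) hdeg
  have hΩdeg : Ω = 0 ∨ Ω.natDegree + 1 ≤ t * u := by
    rcases Nat.eq_zero_or_pos t with ht0 | ht1
    · left
      rw [hΩ, Finset.card_eq_zero.mp ht0, Finset.sum_empty]
    · right
      have hbound : Ω.natDegree ≤ h.natDegree + (t - 1) * u := by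
        rw [hΩ]
        refine natDegree_sum_le_of_forall_le _ _ fun i hi => ?_
        refine le_trans natDegree_mul_le (add_le_add ?_ ?_)
        · exact le_trans (natDegree_C_mul_le _ _) (natDegree_polySubst_le φ h _)
        · refine le_trans (Polynomial.natDegree_prod_le _ _) ?_
          refine le_trans (Finset.sum_le_card_nsmul _ _ u
            fun k _ => natDegree_polySubst_le _ _ _) ?_
          simp [Finset.card_erase_of_mem hi, smul_eq_mul, mul_comm, hts]
      have hsum : (t - 1) * u + u = t * u := by
        rw [Nat.sub_one_mul, Nat.sub_add_cancel (Nat.le_mul_of_pos_left u ht1)]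
      omega
  -- final combination
  have hdvdD : (Polynomial.X : Polynomial E) ^ (μ - 1) ∣ lam * Ω - om * Λ := by
    have : lam * Ω - om * Λ = (-lam) * (Λ * S - Ω) + Λ * (lam * S - om) := by ring
    rw [this]
    exact dvd_add (Dvd.dvd.mul_left step4 _) (Dvd.dvd.mul_left hke _)
  have h2K : 2 * K ≤ μ - 1 := by
    have := Nat.div_mul_le_self (μ - 1) 2
    omega
  have hμ1 : 1 ≤ μ - 1 := by omega
  have b1 : (lam * Ω).natDegree < μ - 1 := by
    rcases hΩdeg with h0 | h1
    · rw [h0, mul_zero, natDegree_zero]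
      omega
    · have hm := natDegree_mul_le (p := lam) (q := Ω)
      omega
  have b2 : (om * Λ).natDegree < μ - 1 := by
    rcases eq_or_ne om 0 with h0 | h0
    · rw [h0, zero_mul, natDegree_zero]
      omega
    · have hom : om.natDegree < lam.natDegree := natDegree_lt_natDegree h0 homdeg
      have hm := natDegree_mul_le (p := om) (q := Λ)
      omega
  have hD0 : lam * Ω - om * Λ = 0 := by
    by_contra hD0
    have h1 : μ - 1 ≤ (lam * Ω - om * Λ).natDegree := by
      have := Polynomial.natDegree_le_of_dvd hdvdD hD0
      simpa [Polynomial.natDegree_X_pow] using this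
    have h2 := Polynomial.natDegree_sub_le (lam * Ω) (om * Λ)
    have h3 := max_le_iff.mp (le_of_lt (max_lt b1 b2))
    omega
  exact sub_eq_zero.mp hD0
end
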